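/- If β > 0, α ∈ (0,1), h₁ = h₂ = 0 and 2β√(α(1-α)) ≤ 1, then the only solution of the system m̄ = tanh(2β(1-α)n̄), n̄ = tanh(2βα m̄) is m̄ = n̄ = 0. -/
import Mathlib

open Real

lemma sinh_lt_mul_cosh {x : ℝ} (hx : 0 < x) : Real.sinh x < x * Real.cosh x := by
  have h : StrictMonoOn (fun y : ℝ => y * Real.cosh y - Real.sinh y) (Set.Ici 0) := by
    apply strictMonoOn_of_deriv_pos (convex_Ici 0)
    · fun_prop
    · intro y hy
      rw [interior_Ici, Set.mem_Ioi] at hy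
      have hd : HasDerivAt (fun y : ℝ => y * Real.cosh y - Real.sinh y)
          (1 * Real.cosh y + y * Real.sinh y - Real.cosh y) y :=
        ((hasDerivAt_id y).mul (Real.hasDerivAt_cosh y)).sub (Real.hasDerivAt_sinh y)
      rw [hd.deriv]
      have hsp := Real.sinh_pos_iff.2 hy
      nlinarith
  have := h (Set.self_mem_Ici) (Set.mem_Ici.2 hx.le) hx
  simpa using this

lemma tanh_lt_self {x : ℝ} (hx : 0 < x) : Real.tanh x < x := by
  rw [Real.tanh_eq_sinh_div_cosh, div_lt_iff₀ (Real.cosh_pos x)]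
  exact sinh_lt_mul_cosh hx

lemma tanh_pos {x : ℝ} (hx : 0 < x) : 0 < Real.tanh x := by
  rw [Real.tanh_eq_sinh_div_cosh]
  exact div_pos (Real.sinh_pos_iff.2 hx) (Real.cosh_pos x)

lemma abs_tanh_lt_abs {x : ℝ} (hx : x ≠ 0) : |Real.tanh x| < |x| := by
  rcases hx.lt_or_gt with h | h
  · rw [← abs_neg x, ← abs_neg (Real.tanh x), ← Real.tanh_neg]
    rw [abs_of_pos (tanh_pos (neg_pos.2 h)), abs_of_pos (neg_pos.2 h)]
    exact tanh_lt_self (neg_pos.2 h)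
  · rw [abs_of_pos (tanh_pos h), abs_of_pos h]
    exact tanh_lt_self h

theorem bipartite_CW_high_temperature_trivial (α β m n : ℝ)
    (hα : α ∈ Set.Ioo (0 : ℝ) 1) (hβ : 0 < β)
    (hcond : 2 * β * Real.sqrt (α * (1 - α)) ≤ 1)
    (hm : m = Real.tanh (2 * β * (1 - α) * n))
    (hn : n = Real.tanh (2 * β * α * m)) :
    m = 0 ∧ n = 0 := by
  obtain ⟨hα0, hα1⟩ := hα
  have hs : Real.sqrt (α * (1 - α)) ^ 2 = α * (1 - α) :=
    Real.sq_sqrt (by nlinarith)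
  have hkey : 4 * β ^ 2 * (α * (1 - α)) ≤ 1 := by
    have h0 : 0 ≤ 2 * β * Real.sqrt (α * (1 - α)) := by positivity
    nlinarith [mul_le_mul hcond hcond h0 zero_le_one]
  by_cases hm0 : m = 0
  · refine ⟨hm0, ?_⟩
    rw [hn, hm0]
    simp
  · exfalso
    have hn0 : n ≠ 0 := by
      intro h
      apply hm0
      rw [hm, h]
      simp
    have h1 : |m| < |2 * β * (1 - α) * n| := by
      rw [hm]
      exact abs_tanh_lt_abs (mul_ne_zero (mul_ne_zero (mul_ne_zero two_ne_zero hβ.ne')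
        (by linarith : (1 : ℝ) - α ≠ 0)) hn0)
    have h2 : |n| < |2 * β * α * m| := by
      rw [hn]
      exact abs_tanh_lt_abs (mul_ne_zero (mul_ne_zero (mul_ne_zero two_ne_zero hβ.ne')
        hα0.ne') hm0)
    rw [abs_mul, abs_mul] at h1 h2
    have e1 : |2 * β| = 2 * β := abs_of_pos (by linarith)
    have e2 : |1 - α| = 1 - α := abs_of_pos (by linarith)
    have e3 : |α| = α := abs_of_pos hα0
    rw [e1, e2] at h1
    rw [e1, e3] at h2
    have hmpos : 0 < |m| := abs_pos.2 hm0
    have hnpos : 0 < |n| := abs_pos.2 hn0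
    nlinarith [mul_lt_mul'' h1 h2 (abs_nonneg m) (abs_nonneg n), mul_pos hmpos hnpos,
      mul_nonneg hmpos.le hnpos.le]
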